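/- For every k ≥ 2 there exists n with PPL_t(n) = PPL_t(n+1) = k, so SP2_t(k) is well-defined; moreover SP2_t(k) = 4·SP_t(k−1) − 2 for all k ≥ 2, and SP_t(k−1) ≤ SP2_t(k−1) < SP_t(k) for all k ≥ 3. -/

import Mathlib

/-- The Thue–Morse word: `tm n` is the number of ones (sum of binary digits)
in the binary expansion of `n`, taken mod 2. -/
def tm (n : ℕ) : ℕ := (Nat.digits 2 n).sum % 2

/-- `ps` is a factorization of the finite word `w` into nonempty palindromes. -/
def IsPalDecomp (w : List ℕ) (ps : List (List ℕ)) : Prop :=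
  ps.flatten = w ∧ ∀ p ∈ ps, p ≠ [] ∧ p.Palindrome

/-- The palindromic length of a finite word: the least number of nonempty
palindromes whose concatenation is the word (0 for the empty word). -/
noncomputable def palLen (w : List ℕ) : ℕ :=
  sInf {k | ∃ ps, ps.length = k ∧ IsPalDecomp w ps}

/-- `pplTM n` is the palindromic length of the prefix of length `n`
of the Thue–Morse word. -/
noncomputable def pplTM (n : ℕ) : ℕ := palLen ((List.range n).map tm)

/-- `spTM k` is the length of the shortest prefix of the Thue–Morse word of
palindromic length `k`. -/
noncomputable def spTM (k : ℕ) : ℕ := sInf {n | pplTM n = k}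

/-- `sp2TM k` is the least `n` with `PPL_t(n) = PPL_t(n+1) = k`. -/
noncomputable def sp2TM (k : ℕ) : ℕ := sInf {n | pplTM n = k ∧ pplTM (n + 1) = k}


section AuxTM




lemma tm_le_one (n : ℕ) : tm n ≤ 1 := Nat.lt_succ_iff.mp (Nat.mod_lt _ (by norm_num))

lemma tm_zero : tm 0 = 0 := by simp [tm]
lemma tm_one : tm 1 = 1 := by simp [tm]

lemma tm_two_mul (n : ℕ) : tm (2*n) = tm n := by
  rcases Nat.eq_zero_or_pos n with h | h
  · simp [h]
  · unfold tm
    rw [Nat.digits_def' (by norm_num : (1:ℕ) < 2) (by omega)]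
    have h1 : 2*n % 2 = 0 := by omega
    have h2 : 2*n / 2 = n := by omega
    rw [h1, h2, List.sum_cons, Nat.zero_add]

lemma tm_two_mul_add_one (n : ℕ) : tm (2*n+1) = 1 - tm n := by
  unfold tm
  rw [Nat.digits_def' (by norm_num : (1:ℕ) < 2) (by omega)]
  have h1 : (2*n+1) % 2 = 1 := by omega
  have h2 : (2*n+1) / 2 = n := by omega
  rw [h1, h2, List.sum_cons]
  omega

lemma tm4_0 (n : ℕ) : tm (4*n) = tm n := by
  have : 4*n = 2*(2*n) := by ring
  rw [this, tm_two_mul, tm_two_mul]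
lemma tm4_1 (n : ℕ) : tm (4*n+1) = 1 - tm n := by
  have : 4*n+1 = 2*(2*n)+1 := by ring
  rw [this, tm_two_mul_add_one, tm_two_mul]
lemma tm4_2 (n : ℕ) : tm (4*n+2) = 1 - tm n := by
  have : 4*n+2 = 2*(2*n+1) := by ring
  rw [this, tm_two_mul, tm_two_mul_add_one]
lemma tm4_3 (n : ℕ) : tm (4*n+3) = tm n := by
  have : 4*n+3 = 2*(2*n+1)+1 := by ring
  rw [this, tm_two_mul_add_one, tm_two_mul_add_one]
  have := tm_le_one n; omega

def f : ℕ → ℕ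
  | 0 => 0
  | (n+1) =>
    if h0 : (n+1) % 4 = 0 then f ((n+1)/4)
    else if h1 : (n+1) % 4 = 1 then f ((n+1)/4) + 1
    else if h2 : (n+1) % 4 = 2 then min (f ((n+1)/4)) (f ((n+1)/4 + 1)) + 2
    else min (f ((n+1)/4) + 2) (f ((n+1)/4 + 1) + 1)
decreasing_by
  all_goals omega

lemma f_zero : f 0 = 0 := by simp [f]

lemma f4_1 (m : ℕ) : f (4*m+1) = f m + 1 := by
  have e : 4*m+1 = (4*m)+1 := rfl
  rw [show (4*m+1 : ℕ) = (4*m)+1 from rfl, f]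
  have h0 : (4*m+1) % 4 = 1 := by omega
  have h4 : (4*m+1) / 4 = m := by omega
  simp [h0, h4]

lemma f4_2 (m : ℕ) : f (4*m+2) = min (f m) (f (m+1)) + 2 := by
  rw [show (4*m+2 : ℕ) = (4*m+1)+1 from rfl, f]
  have h0 : (4*m+2) % 4 = 2 := by omega
  have h4 : (4*m+2) / 4 = m := by omega
  simp only [show (4*m+1)+1 = 4*m+2 from rfl, h0, h4]
  simp

lemma f4_3 (m : ℕ) : f (4*m+3) = min (f m + 2) (f (m+1) + 1) := by
  rw [show (4*m+3 : ℕ) = (4*m+2)+1 from rfl, f]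
  have h0 : (4*m+3) % 4 = 3 := by omega
  have h4 : (4*m+3) / 4 = m := by omega
  simp only [show (4*m+2)+1 = 4*m+3 from rfl, h4]
  simp [h0]

lemma f4_0 (m : ℕ) : f (4*m) = f m := by
  cases m with
  | zero => simp [f]
  | succ k =>
    rw [show (4*(k+1) : ℕ) = (4*k+3)+1 from by ring, f]
    have h0 : (4*k+3+1) % 4 = 0 := by omega
    have h4 : (4*k+3+1) / 4 = k+1 := by omega
    simp [h0, h4]

-- step lemmas for f
lemma f_step : ∀ n : ℕ, f (n+1) ≤ f n + 1 ∧ f n ≤ f (n+1) + 1 := by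
  intro n
  induction n using Nat.strong_induction_on with
  | _ n IH =>
    obtain ⟨m, r, hr, rfl⟩ : ∃ m r, r < 4 ∧ n = 4*m + r :=
      ⟨n/4, n%4, Nat.mod_lt _ (by norm_num), (Nat.div_add_mod n 4).symm⟩
    have hm1 : f (m+1) ≤ f m + 1 ∧ f m ≤ f (m+1) + 1 := by
      rcases Nat.eq_zero_or_pos m with h | h
      · subst h; constructor <;> simp [f_zero, show f 1 = 1 from by rw [show (1:ℕ) = 4*0+1 from rfl, f4_1, f_zero]]
      · exact IH m (by omega)
    interval_cases r
    · simp only [Nat.add_zero]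
      rw [f4_1, f4_0]; omega
    · rw [show 4*m+1+1 = 4*m+2 from rfl, f4_2, f4_1]
      rcases min_choice (f m) (f (m+1)) with h | h <;> rw [h] <;> omega
    · rw [show 4*m+2+1 = 4*m+3 from rfl, f4_3, f4_2]
      rcases min_choice (f m) (f (m+1)) with h | h <;>
        rcases min_choice (f m + 2) (f (m+1) + 1) with h' | h' <;> rw [h, h'] <;> omega
    · rw [show 4*m+3+1 = 4*(m+1) from by ring, f4_0, f4_3]
      rcases min_choice (f m + 2) (f (m+1) + 1) with h' | h' <;> rw [h'] <;> omega

lemma F1 (n : ℕ) : f (n+1) ≤ f n + 1 := (f_step n).1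
lemma F2 (n : ℕ) : f n ≤ f (n+1) + 1 := (f_step n).2

lemma F1' {a b : ℕ} (h : a ≤ b) : f b ≤ f a + (b - a) := by
  induction b with
  | zero => interval_cases a; simp
  | succ k ih =>
    rcases Nat.lt_or_ge a (k+1) with h' | h'
    · have := ih (by omega); have := F1 k; omega
    · have : a = k+1 := by omega
      subst this; simp

-- adjacent equal letters force odd position
lemma tm_adj {a : ℕ} (h : tm a = tm (a+1)) : a % 2 = 1 := by
  by_contra hc
  obtain ⟨v, rfl⟩ : ∃ v, a = 2*v := ⟨a/2, by omega⟩
  rw [tm_two_mul, tm_two_mul_add_one] at h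
  have := tm_le_one v; omega

-- no odd palindrome of radius 2
lemma L3 (x : ℕ) (h1 : tm (x+1) = tm (x+3)) (h2 : tm x = tm (x+4)) : False := by
  obtain ⟨u, rfl | rfl⟩ : ∃ u, x = 2*u ∨ x = 2*u+1 := ⟨x/2, by omega⟩
  · have a1 : tm (2*u+1) = 1 - tm u := tm_two_mul_add_one u
    have a2 : tm (2*u+3) = 1 - tm (u+1) := by
      rw [show 2*u+3 = 2*(u+1)+1 from by ring]; exact tm_two_mul_add_one (u+1)
    have a3 : tm (2*u) = tm u := tm_two_mul u
    have a4 : tm (2*u+4) = tm (u+2) := by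
      rw [show 2*u+4 = 2*(u+2) from by ring]; exact tm_two_mul (u+2)
    have b1 := tm_le_one u; have b2 := tm_le_one (u+1)
    have e1 : tm u = tm (u+1) := by omega
    have e2 : tm (u+1) = tm (u+1+1) := by
      have : tm (u+2) = tm u := by omega
      rw [show u+1+1 = u+2 from rfl, this, e1]
    have := tm_adj e1; have := tm_adj e2; omega
  · have a1 : tm (2*u+1+1) = tm (u+1) := by
      rw [show 2*u+1+1 = 2*(u+1) from by ring]; exact tm_two_mul (u+1)
    have a2 : tm (2*u+1+3) = tm (u+2) := by
      rw [show 2*u+1+3 = 2*(u+2) from by ring]; exact tm_two_mul (u+2)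
    have a3 : tm (2*u+1) = 1 - tm u := tm_two_mul_add_one u
    have a4 : tm (2*u+1+4) = 1 - tm (u+2) := by
      rw [show 2*u+1+4 = 2*(u+2)+1 from by ring]; exact tm_two_mul_add_one (u+2)
    have b1 := tm_le_one u; have b2 := tm_le_one (u+2)
    have e1 : tm (u+1) = tm (u+2) := by omega
    have e2 : tm u = tm (u+2) := by omega
    have e3 : tm u = tm (u+1) := by omega
    have := tm_adj e3
    have := tm_adj (show tm (u+1) = tm (u+1+1) from e1)
    omega

-- aba condition: f jump lemma
lemma OO (x : ℕ) (h : tm x = tm (x+2)) : f (x+3) ≤ f x + 1 := by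
  obtain ⟨u, rfl | rfl⟩ : ∃ u, x = 2*u ∨ x = 2*u+1 := ⟨x/2, by omega⟩
  · have a1 : tm (2*u) = tm u := tm_two_mul u
    have a2 : tm (2*u+2) = tm (u+1) := by
      rw [show 2*u+2 = 2*(u+1) from by ring]; exact tm_two_mul (u+1)
    have e : tm u = tm (u+1) := by omega
    obtain ⟨v, rfl⟩ : ∃ v, u = 2*v+1 := by have := tm_adj e; exact ⟨u/2, by omega⟩
    have g1 : f (2*(2*v+1)+3) = f (v+1) + 1 := by
      rw [show 2*(2*v+1)+3 = 4*(v+1)+1 from by ring, f4_1]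
    have g2 : f (2*(2*v+1)) = min (f v) (f (v+1)) + 2 := by
      rw [show 2*(2*v+1) = 4*v+2 from by ring, f4_2]
    have := F1 v
    rcases min_choice (f v) (f (v+1)) with h' | h' <;> omega
  · have a1 : tm (2*u+1) = 1 - tm u := tm_two_mul_add_one u
    have a2 : tm (2*u+1+2) = 1 - tm (u+1) := by
      rw [show 2*u+1+2 = 2*(u+1)+1 from by ring]; exact tm_two_mul_add_one (u+1)
    have b1 := tm_le_one u; have b2 := tm_le_one (u+1)
    have e : tm u = tm (u+1) := by omega
    obtain ⟨v, rfl⟩ : ∃ v, u = 2*v+1 := by have := tm_adj e; exact ⟨u/2, by omega⟩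
    have g1 : f (2*(2*v+1)+1+3) = min (f (v+1)) (f (v+1+1)) + 2 := by
      rw [show 2*(2*v+1)+1+3 = 4*(v+1)+2 from by ring, f4_2]
    have g2 : f (2*(2*v+1)+1) = min (f v + 2) (f (v+1) + 1) := by
      rw [show 2*(2*v+1)+1 = 4*v+3 from by ring, f4_3]
    have := F1 v
    rcases min_choice (f (v+1)) (f (v+1+1)) with h1 | h1 <;>
      rcases min_choice (f v + 2) (f (v+1) + 1) with h2 | h2 <;> omega

def PalC (y h : ℕ) : Prop := ∀ a b : ℕ, a + b + 1 = 2*y → y ≤ b → b < y + h → tm a = tm b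
def AntiC (y h : ℕ) : Prop := ∀ a b : ℕ, a + b + 1 = 2*y → y ≤ b → b < y + h → tm a + tm b = 1

lemma mainPA : ∀ N : ℕ,
    (∀ y h, 1 ≤ h → h ≤ y → N = y + h → PalC y h → f N ≤ f (y - h) + 1)
  ∧ (∀ y g, 1 ≤ g → g ≤ y → N = y + g → AntiC y g →
       f (2*N) ≤ f (2*(y-g)) + 1 ∧ f (2*N-1) ≤ f (2*(y-g)+1) + 1) := by
  intro N
  induction N using Nat.strong_induction_on with
  | _ N IH =>
    constructor
    · -- palindrome part
      intro y h h1 hhy hN hP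
      subst hN
      -- y is even
      have hyev : y % 2 = 0 := by
        have hadj : tm (y-1) = tm y := hP (y-1) y (by omega) le_rfl (by omega)
        rw [show y = (y-1)+1 from by omega] at hadj
        have := tm_adj hadj; omega
      obtain ⟨z, rfl⟩ : ∃ z, y = 2*z := ⟨y/2, by omega⟩
      have hz1 : 1 ≤ z := by omega
      have hA : AntiC z ((h+1)/2) := by
        intro a b hs hb1 hb2
        have hp := hP (2*a+1) (2*b) (by omega) (by omega) (by omega)
        have t1 := tm_two_mul_add_one a
        have t2 := tm_two_mul b
        have := tm_le_one a; have := tm_le_one b; omega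
      have IHA := (IH (z + (h+1)/2) (by omega)).2 z ((h+1)/2) (by omega) (by omega) rfl hA
      by_cases hpar : h % 2 = 0
      · rw [show 2*z + h = 2*(z + (h+1)/2) from by omega,
            show 2*z - h = 2*(z - (h+1)/2) from by omega]
        exact IHA.1
      · rw [show 2*z + h = 2*(z + (h+1)/2) - 1 from by omega,
            show 2*z - h = 2*(z - (h+1)/2) + 1 from by omega]
        exact IHA.2
    · -- antipalindrome part
      intro y g h1 hgy hN hA
      subst hN
      obtain ⟨z, rfl | rfl⟩ : ∃ z, y = 2*z ∨ y = 2*z+1 := ⟨y/2, by omega⟩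
      · -- y even
        have hz1 : 1 ≤ z := by omega
        have hPz : PalC z ((g+1)/2) := by
          intro a b hs hb1 hb2
          have hp := hA (2*a+1) (2*b) (by omega) (by omega) (by omega)
          have t1 := tm_two_mul_add_one a
          have t2 := tm_two_mul b
          have := tm_le_one a; have := tm_le_one b; omega
        have hAA := (IH (z + (g+1)/2) (by omega)).1 z ((g+1)/2) (by omega) (by omega) rfl hPz
        by_cases hpar : g % 2 = 0
        · -- g even, g' = g/2 ; uses only (A)
          constructor
          · rw [show 2*(2*z + g) = 4*(z + (g+1)/2) from by omega,
                show 2*(2*z - g) = 4*(z - (g+1)/2) from by omega, f4_0, f4_0]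
            exact hAA
          · rw [show 2*(2*z + g) - 1 = 4*(z + (g+1)/2 - 1)+3 from by omega,
                show 2*(2*z - g) + 1 = 4*(z - (g+1)/2)+1 from by omega, f4_3, f4_1]
            rw [show z + (g+1)/2 - 1 + 1 = z + (g+1)/2 from by omega]
            have := min_le_right (f (z + (g+1)/2 - 1) + 2) (f (z + (g+1)/2) + 1)
            omega
        · by_cases hg1 : g = 1
          · subst hg1
            have hAz : f (z+1) ≤ f (z-1) + 1 := by
              have : z + (1+1)/2 = z+1 := by omega
              rw [this, show z - (1+1)/2 = z-1 from by omega] at hAA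
              exact hAA
            have hF : f z ≤ f (z-1) + 1 := by
              have := F1 (z-1); rw [show z-1+1 = z from by omega] at this; exact this
            constructor
            · rw [show 2*(2*z+1) = 4*z+2 from by omega,
                  show 2*(2*z-1) = 4*(z-1)+2 from by omega, f4_2, f4_2]
              rw [show z-1+1 = z from by omega]
              rcases min_choice (f z) (f (z+1)) with h' | h' <;>
                rcases min_choice (f (z-1)) (f z) with h'' | h'' <;>
                rw [h', h''] <;> omega
            · rw [show 2*(2*z+1) - 1 = 4*z+1 from by omega,
                  show 2*(2*z-1) + 1 = 4*(z-1)+3 from by omega, f4_1, f4_3]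
              rw [show z-1+1 = z from by omega]
              rcases min_choice (f (z-1) + 2) (f z + 1) with h' | h' <;> rw [h'] <;> omega
          · -- g odd, g ≥ 3, g' = (g+1)/2 ≥ 2, uses (A) and (B)
            have hg3 : 3 ≤ g := by omega
            have hPz' : PalC z ((g+1)/2 - 1) := fun a b hs hb1 hb2 => hPz a b hs hb1 (by omega)
            have hBB := (IH (z + ((g+1)/2 - 1)) (by omega)).1 z ((g+1)/2 - 1)
              (by omega) (by omega) rfl hPz'
            set G := (g+1)/2 with hG
            have hGz : 2 ≤ G ∧ G ≤ z := by constructor <;> omega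
            -- (A): f (z+G) ≤ f (z-G) + 1 ; (B): f (z+G-1) ≤ f (z-G+1) + 1
            have hB' : f (z + G - 1) ≤ f (z - G + 1) + 1 := by
              rw [show z + G - 1 = z + (G-1) from by omega,
                  show z - G + 1 = z - (G-1) from by omega]
              exact hBB
            have hF : f (z - G + 1) ≤ f (z - G) + 1 := F1 (z - G)
            constructor
            · rw [show 2*(2*z+g) = 4*(z+G-1)+2 from by omega,
                  show 2*(2*z-g) = 4*(z-G)+2 from by omega, f4_2, f4_2]
              rw [show z+G-1+1 = z+G from by omega, show z-G+1 = z-G+1 from rfl]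
              rcases min_choice (f (z+G-1)) (f (z+G)) with h' | h' <;>
                rcases min_choice (f (z-G)) (f (z-G+1)) with h'' | h'' <;>
                rw [h', h''] <;> omega
            · rw [show 2*(2*z+g) - 1 = 4*(z+G-1)+1 from by omega,
                  show 2*(2*z-g) + 1 = 4*(z-G)+3 from by omega, f4_1, f4_3]
              rcases min_choice (f (z-G) + 2) (f (z-G+1) + 1) with h' | h' <;> rw [h'] <;> omega
      · -- y odd, y = 2z+1
        have hcond : 2 ≤ g → tm (z-1) = tm (z+1) := by
          intro hg2
          have hz1 : 1 ≤ z := by omega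
          have hp := hA (2*(z-1)+1) (2*(z+1)) (by omega) (by omega) (by omega)
          have t1 := tm_two_mul_add_one (z-1)
          have t2 := tm_two_mul (z+1)
          have := tm_le_one (z-1); have := tm_le_one (z+1); omega
        have hg3 : g ≤ 3 := by
          by_contra hc
          have hz2 : 2 ≤ z := by omega
          have hp := hA (2*(z-2)+1) (2*(z+2)) (by omega) (by omega) (by omega)
          have t1 := tm_two_mul_add_one (z-2)
          have t2 := tm_two_mul (z+2)
          have c2 : tm (z-2) = tm (z+2) := by
            have := tm_le_one (z-2); have := tm_le_one (z+2); omega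
          have c1 := hcond (by omega)
          apply L3 (z-2)
          · rw [show z-2+1 = z-1 from by omega, show z-2+3 = z+1 from by omega]; exact c1
          · rw [show z-2+4 = z+2 from by omega]; exact c2
        interval_cases g
        · -- g = 1
          constructor
          · rw [show 2*(2*z+1+1) = 4*(z+1) from by omega,
                show 2*(2*z+1-1) = 4*z from by omega, f4_0, f4_0]
            exact F1 z
          · rw [show 2*(2*z+1+1) - 1 = 4*z+3 from by omega,
                show 2*(2*z+1-1) + 1 = 4*z+1 from by omega, f4_3, f4_1]
            have := F1 z
            rcases min_choice (f z + 2) (f (z+1) + 1) with h' | h' <;> rw [h'] <;> omega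
        · -- g = 2
          have hz1 : 1 ≤ z := by omega
          have hOO : f (z+2) ≤ f (z-1) + 1 := by
            have hc := hcond (by omega)
            have := OO (z-1) (by rw [show z-1+2 = z+1 from by omega]; exact hc)
            rw [show z-1+3 = z+2 from by omega] at this; exact this
          have hF : f (z+1) ≤ f z + 1 := F1 z
          have hF' : f z ≤ f (z-1) + 1 := by
            have := F1 (z-1); rw [show z-1+1 = z from by omega] at this; exact this
          constructor
          · rw [show 2*(2*z+1+2) = 4*(z+1)+2 from by omega,
                show 2*(2*z+1-2) = 4*(z-1)+2 from by omega, f4_2, f4_2]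
            rw [show z+1+1 = z+2 from rfl, show z-1+1 = z from by omega]
            rcases min_choice (f (z+1)) (f (z+2)) with h' | h' <;>
              rcases min_choice (f (z-1)) (f z) with h'' | h'' <;> rw [h', h''] <;> omega
          · rw [show 2*(2*z+1+2) - 1 = 4*(z+1)+1 from by omega,
                show 2*(2*z+1-2) + 1 = 4*(z-1)+3 from by omega, f4_1, f4_3]
            rw [show z-1+1 = z from by omega]
            rcases min_choice (f (z-1) + 2) (f z + 1) with h' | h' <;> rw [h'] <;> omega
        · -- g = 3
          have hz1 : 1 ≤ z := by omega
          have hOO : f (z+2) ≤ f (z-1) + 1 := by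
            have hc := hcond (by omega)
            have := OO (z-1) (by rw [show z-1+2 = z+1 from by omega]; exact hc)
            rw [show z-1+3 = z+2 from by omega] at this; exact this
          constructor
          · rw [show 2*(2*z+1+3) = 4*(z+2) from by omega,
                show 2*(2*z+1-3) = 4*(z-1) from by omega, f4_0, f4_0]
            exact hOO
          · rw [show 2*(2*z+1+3) - 1 = 4*(z+1)+3 from by omega,
                show 2*(2*z+1-3) + 1 = 4*(z-1)+1 from by omega, f4_3, f4_1]
            rw [show z+1+1 = z+2 from rfl]
            rcases min_choice (f (z+1) + 2) (f (z+2) + 1) with h' | h' <;> rw [h'] <;> omega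

lemma main_suffix (n ℓ : ℕ) (h1 : 1 ≤ ℓ) (h2 : ℓ ≤ n)
    (hpal : ∀ d, d < ℓ → tm (n - ℓ + d) = tm (n - 1 - d)) :
    f n ≤ f (n - ℓ) + 1 := by
  by_cases hev : ℓ % 2 = 0
  · -- even length: use PalC
    obtain ⟨h, rfl⟩ : ∃ h, ℓ = 2*h := ⟨ℓ/2, by omega⟩
    have hP : PalC (n - h) h := by
      intro a b hs hb1 hb2
      have hd := hpal (b - (n - 2*h)) (by omega)
      rw [show n - 2*h + (b - (n - 2*h)) = b from by omega,
          show n - 1 - (b - (n - 2*h)) = a from by omega] at hd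
      exact hd.symm
    have := (mainPA n).1 (n - h) h (by omega) (by omega) (by omega) hP
    rw [show n - h - h = n - 2*h from by omega] at this
    exact this
  · rcases Nat.lt_or_ge ℓ 4 with hl | hl
    · interval_cases ℓ
      · -- ℓ = 1
        have := F1 (n-1); rw [show n-1+1 = n from by omega] at this; omega
      · exact absurd rfl hev
      · -- ℓ = 3
        have hc := hpal 0 (by omega)
        rw [show n - 3 + 0 = n - 3 from by omega, show n - 1 - 0 = n - 1 from by omega] at hc
        have := OO (n-3) (by rw [show n-3+2 = n-1 from by omega]; exact hc)
        rw [show n-3+3 = n from by omega] at this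
        exact this
    · -- odd length ≥ 5 : impossible
      exfalso
      obtain ⟨r, rfl⟩ : ∃ r, ℓ = 2*r+1 := ⟨ℓ/2, by omega⟩
      have hr2 : 2 ≤ r := by omega
      -- center x = n - 1 - r
      have c1 := hpal (r-1) (by omega)
      have c2 := hpal (r-2) (by omega)
      rw [show n - (2*r+1) + (r-1) = (n-1-r) - 1 from by omega,
          show n - 1 - (r-1) = (n-1-r) + 1 from by omega] at c1
      rw [show n - (2*r+1) + (r-2) = (n-1-r) - 2 from by omega,
          show n - 1 - (r-2) = (n-1-r) + 2 from by omega] at c2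
      apply L3 ((n-1-r) - 2)
      · rw [show (n-1-r)-2+1 = (n-1-r)-1 from by omega, show (n-1-r)-2+3 = (n-1-r)+1 from by omega]
        exact c1
      · rw [show (n-1-r)-2+4 = (n-1-r)+2 from by omega]
        exact c2





def W (n : ℕ) : List ℕ := (List.range n).map tm
def SEG (c n : ℕ) : List ℕ := (List.range' c (n - c)).map tm

lemma pplTM_eq (n : ℕ) : pplTM n = palLen (W n) := rfl

lemma W_length (n : ℕ) : (W n).length = n := by simp [W]
lemma SEG_length (c n : ℕ) : (SEG c n).length = n - c := by simp [SEG]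

lemma W_append (c n : ℕ) (h : c ≤ n) : W n = W c ++ SEG c n := by
  unfold W SEG
  rw [← List.map_append, List.range_eq_range', List.range_eq_range']
  congr 1
  have := @List.range'_append 0 c (n - c) 1
  simp only [Nat.zero_add, Nat.one_mul] at this
  rw [this]
  congr 1
  omega

lemma flatten_map_singleton (l : List ℕ) : (l.map (fun a => [a])).flatten = l := by
  induction l with
  | nil => rfl
  | cons a t ih => simp [ih]

lemma palLen_nonempty (w : List ℕ) :
    {k | ∃ ps, ps.length = k ∧ IsPalDecomp w ps}.Nonempty := by
  refine ⟨w.length, w.map (fun a => [a]), by simp, flatten_map_singleton w, ?_⟩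
  intro p hp
  simp only [List.mem_map] at hp
  obtain ⟨a, _, rfl⟩ := hp
  exact ⟨by simp, List.Palindrome.singleton a⟩

lemma palLen_le {w : List ℕ} {ps : List (List ℕ)} (h : IsPalDecomp w ps) :
    palLen w ≤ ps.length := Nat.sInf_le ⟨ps, rfl, h⟩

lemma exists_decomp (w : List ℕ) :
    ∃ ps, IsPalDecomp w ps ∧ ps.length = palLen w := by
  obtain ⟨ps, hlen, hd⟩ := Nat.sInf_mem (palLen_nonempty w)
  exact ⟨ps, hd, hlen⟩

lemma SEG_getElem (c n d : ℕ) (h : d < (SEG c n).length) : (SEG c n)[d] = tm (c + d) := by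
  simp only [SEG, List.getElem_map, List.getElem_range', Nat.one_mul]

lemma SEG_pal_of_pointwise {c n : ℕ} (hcn : c ≤ n)
    (H : ∀ i, c ≤ i → i < n → tm i = tm (c + (n-1) - i)) : (SEG c n).Palindrome := by
  apply List.Palindrome.of_reverse_eq
  apply List.ext_getElem (by simp)
  intro d h1 h2
  have hlen : (SEG c n).length = n - c := SEG_length c n
  have hd : d < n - c := by rw [← hlen]; exact h2
  rw [List.getElem_reverse, SEG_getElem, SEG_getElem]
  rw [H (c + d) (by omega) (by omega)]
  congr 1
  rw [hlen]
  omega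

lemma pointwise_of_SEG_pal {c n : ℕ} (hcn : c ≤ n) (hp : (SEG c n).Palindrome) :
    ∀ i, c ≤ i → i < n → tm i = tm (c + (n-1) - i) := by
  intro i hi1 hi2
  have hrev := hp.reverse_eq
  have hlen : (SEG c n).length = n - c := SEG_length c n
  have h1 : i - c < (SEG c n).length := by omega
  have h2 : i - c < (SEG c n).reverse.length := by rw [List.length_reverse]; exact h1
  have this := List.getElem_of_eq hrev h2
  rw [List.getElem_reverse, SEG_getElem, SEG_getElem] at this
  rw [show c + (i - c) = i from by omega] at this
  rw [← this]
  congr 1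
  rw [hlen]
  omega

-- image reflection lemma
lemma img {c n : ℕ} (H : ∀ i, c ≤ i → i ≤ n → tm i = tm (c + n - i)) :
    ∀ j, 4*c ≤ j → j ≤ 4*n+3 → tm j = tm (4*(c+n) + 3 - j) := by
  intro j hj1 hj2
  obtain ⟨i, r, hr, rfl⟩ : ∃ i r, r < 4 ∧ j = 4*i + r :=
    ⟨j/4, j%4, Nat.mod_lt _ (by norm_num), (Nat.div_add_mod j 4).symm⟩
  have hi1 : c ≤ i := by omega
  have hi2 : i ≤ n := by omega
  have hi := H i hi1 hi2
  have hle := tm_le_one i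
  have hle' := tm_le_one (c + n - i)
  interval_cases r
  · rw [show 4*(c+n)+3 - (4*i+0) = 4*(c+n-i)+3 from by omega,
        show 4*i+0 = 4*i from rfl, tm4_0, tm4_3]
    exact hi
  · rw [show 4*(c+n)+3 - (4*i+1) = 4*(c+n-i)+2 from by omega, tm4_1, tm4_2, hi]
  · rw [show 4*(c+n)+3 - (4*i+2) = 4*(c+n-i)+1 from by omega, tm4_2, tm4_1, hi]
  · rw [show 4*(c+n)+3 - (4*i+3) = 4*(c+n-i) from by omega, tm4_3, tm4_0]
    exact hi

-- lower bound : any palindromic decomposition of W n has at least f n parts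
lemma decomp_bound : ∀ ps : List (List ℕ), ∀ n, IsPalDecomp (W n) ps → f n ≤ ps.length := by
  intro ps
  induction ps using List.reverseRecOn with
  | nil =>
    intro n h
    have h0 := congrArg List.length h.1
    simp only [List.flatten_nil, List.length_nil, W_length] at h0
    rw [← h0, f_zero]
    simp
  | append_singleton ps q ih =>
    intro n h
    obtain ⟨hflat, hall⟩ := h
    rw [List.flatten_append] at hflat
    simp only [List.flatten_cons, List.flatten_nil, List.append_nil] at hflat
    obtain ⟨hqne, hqpal⟩ := hall q (by simp)
    have hlen : ps.flatten.length + q.length = n := by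
      have := congrArg List.length hflat
      simpa [W_length] using this
    have hq1 : 1 ≤ q.length := by
      cases q with
      | nil => exact absurd rfl hqne
      | cons a t => simp
    set c := n - q.length with hc
    have hcn : c ≤ n := by omega
    have hsplit := List.append_inj (hflat.trans (W_append c n hcn))
      (by rw [W_length]; omega)
    have hps : ps.flatten = W c := hsplit.1
    have hqseg : q = SEG c n := hsplit.2
    have hcl : c < n := by omega
    have H := pointwise_of_SEG_pal hcn (hqseg ▸ hqpal)
    have hfn : f n ≤ f c + 1 := by
      have goal := main_suffix n (n - c) (by omega) (by omega) ?_
      · rwa [show n - (n - c) = c from by omega] at goal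
      intro d hd
      have := H (c + d) (by omega) (by omega)
      rw [show n - (n-c) + d = c + d from by omega, this]
      congr 1
      omega
    have := ih c ⟨hps, fun p hp => hall p (by simp [hp])⟩
    simp only [List.length_append, List.length_cons, List.length_nil]
    omega

-- the morphism 0 ↦ 0110 , 1 ↦ 1001 on words
def phi (l : List ℕ) : List ℕ := l.flatMap (fun a => [a, 1-a, 1-a, a])

lemma phi_nil : phi [] = [] := rfl
lemma phi_cons (a : ℕ) (l : List ℕ) : phi (a :: l) = [a, 1-a, 1-a, a] ++ phi l := rfl
lemma phi_append (u v : List ℕ) : phi (u ++ v) = phi u ++ phi v :=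
  List.flatMap_append

lemma phi_reverse (l : List ℕ) : (phi l).reverse = phi l.reverse := by
  induction l with
  | nil => rfl
  | cons a t ih =>
    have h4 : ([a, 1-a, 1-a, a] : List ℕ).reverse = [a, 1-a, 1-a, a] := by simp
    calc (phi (a :: t)).reverse
        = (([a,1-a,1-a,a] : List ℕ) ++ phi t).reverse := by rw [phi_cons]
      _ = (phi t).reverse ++ ([a,1-a,1-a,a] : List ℕ).reverse := List.reverse_append
      _ = phi t.reverse ++ [a,1-a,1-a,a] := by rw [ih, h4]
      _ = phi (t.reverse ++ [a]) := by rw [phi_append]; rfl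
      _ = phi (a :: t).reverse := by rw [List.reverse_cons]

lemma phi_pal {l : List ℕ} (h : l.Palindrome) : (phi l).Palindrome := by
  apply List.Palindrome.of_reverse_eq
  rw [phi_reverse, h.reverse_eq]

lemma phi_ne_nil {l : List ℕ} (h : l ≠ []) : phi l ≠ [] := by
  cases l with
  | nil => exact absurd rfl h
  | cons a t => simp [phi_cons]

lemma phi_flatten (ps : List (List ℕ)) : (ps.map phi).flatten = phi ps.flatten := by
  induction ps with
  | nil => rfl
  | cons p t ih => simp [phi_append, ih]

lemma W_succ (n : ℕ) : W (n+1) = W n ++ [tm n] := by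
  unfold W
  rw [List.range_succ, List.map_append]
  rfl

lemma W_four (n : ℕ) : W (4*n) = phi (W n) := by
  induction n with
  | zero => rfl
  | succ k ih =>
    rw [show 4*(k+1) = (4*k)+1+1+1+1 from by ring, W_succ, W_succ, W_succ, W_succ, ih,
        W_succ, phi_append]
    have e0 : tm (4*k) = tm k := tm4_0 k
    have e1 : tm (4*k+1) = 1 - tm k := tm4_1 k
    have e2 : tm (4*k+1+1) = 1 - tm k := by rw [show 4*k+1+1 = 4*k+2 from rfl]; exact tm4_2 k
    have e3 : tm (4*k+1+1+1) = tm k := by rw [show 4*k+1+1+1 = 4*k+3 from rfl]; exact tm4_3 k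
    rw [e0, e1, e2, e3]
    simp [phi_cons, phi_nil]

lemma ppl_le_seg {c n : ℕ} (hcn : c < n) (hpal : (SEG c n).Palindrome) :
    pplTM n ≤ pplTM c + 1 := by
  obtain ⟨ps, hd, hlen⟩ := exists_decomp (W c)
  have hdec : IsPalDecomp (W n) (ps ++ [SEG c n]) := by
    constructor
    · rw [List.flatten_append]
      simp only [List.flatten_cons, List.flatten_nil, List.append_nil]
      rw [hd.1, ← W_append c n (by omega)]
    · intro p hp
      rcases List.mem_append.mp hp with h | h
      · exact hd.2 p h
      · simp only [List.mem_singleton] at h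
        subst h
        refine ⟨?_, hpal⟩
        have : (SEG c n).length = n - c := SEG_length c n
        intro hnil
        rw [hnil] at this
        simp at this
        omega
  have := palLen_le hdec
  simp only [List.length_append, List.length_cons, List.length_nil] at this
  rw [pplTM_eq, pplTM_eq]
  omega

lemma ppl_succ (n : ℕ) : pplTM (n+1) ≤ pplTM n + 1 := by
  apply ppl_le_seg (by omega)
  have : SEG n (n+1) = [tm n] := by
    unfold SEG
    rw [show n+1-n = 1 from by omega]
    rfl
  rw [this]
  exact List.Palindrome.singleton _

lemma ppl_four (n : ℕ) : pplTM (4*n) ≤ pplTM n := by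
  obtain ⟨ps, hd, hlen⟩ := exists_decomp (W n)
  have hdec : IsPalDecomp (W (4*n)) (ps.map phi) := by
    constructor
    · rw [phi_flatten, hd.1, W_four]
    · intro p hp
      simp only [List.mem_map] at hp
      obtain ⟨q, hq, rfl⟩ := hp
      obtain ⟨h1, h2⟩ := hd.2 q hq
      exact ⟨phi_ne_nil h1, phi_pal h2⟩
  have := palLen_le hdec
  simp only [List.length_map] at this
  rw [pplTM_eq, pplTM_eq]
  omega

lemma last_pal (n : ℕ) : ∃ c, c ≤ n ∧ pplTM c + 1 ≤ pplTM (n+1) ∧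
    (∀ i, c ≤ i → i ≤ n → tm i = tm (c + n - i)) := by
  obtain ⟨ps, hd, hlen⟩ := exists_decomp (W (n+1))
  rcases List.eq_nil_or_concat ps with rfl | ⟨L, q, rfl⟩
  · exfalso
    have := congrArg List.length hd.1
    simp [W_length] at this
  · rw [List.concat_eq_append] at hd hlen
    obtain ⟨hflat, hall⟩ := hd
    rw [List.flatten_append] at hflat
    simp only [List.flatten_cons, List.flatten_nil, List.append_nil] at hflat
    obtain ⟨hqne, hqpal⟩ := hall q (by simp)
    have hlen2 : L.flatten.length + q.length = n+1 := by
      have := congrArg List.length hflat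
      simpa [W_length] using this
    have hq1 : 1 ≤ q.length := by
      cases q with
      | nil => exact absurd rfl hqne
      | cons a t => simp
    refine ⟨n+1 - q.length, by omega, ?_, ?_⟩
    · have hsplit := List.append_inj (hflat.trans (W_append (n+1-q.length) (n+1) (by omega)))
        (by rw [W_length]; omega)
      have := palLen_le (w := W (n+1-q.length)) (ps := L)
        ⟨hsplit.1, fun p hp => hall p (by simp [hp])⟩
      rw [pplTM_eq, pplTM_eq, ← hlen]
      simp only [List.length_append, List.length_cons, List.length_nil]
      omega
    · intro i h1 h2
      have hsplit := List.append_inj (hflat.trans (W_append (n+1-q.length) (n+1) (by omega)))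
        (by rw [W_length]; omega)
      have H := pointwise_of_SEG_pal (c := n+1-q.length) (n := n+1) (by omega)
        (hsplit.2 ▸ hqpal) i h1 (by omega)
      rw [H, show n+1-q.length + (n+1-1) - i = n+1-q.length + n - i from by omega]

lemma uppB (n : ℕ) : pplTM (4*n+3) ≤ pplTM (4*n+1) + 1 := by
  apply ppl_le_seg (by omega)
  apply SEG_pal_of_pointwise (by omega)
  intro i h1 h2
  have hi : i = 4*n+1 ∨ i = 4*n+2 := by omega
  have e1 := tm4_1 n
  have e2 := tm4_2 n
  rcases hi with rfl | rfl
  · rw [show 4*n+1 + (4*n+3-1) - (4*n+1) = 4*n+2 from by omega, e1, e2]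
  · rw [show 4*n+1 + (4*n+3-1) - (4*n+2) = 4*n+1 from by omega, e1, e2]

lemma U3 (n : ℕ) : pplTM (4*n+3) ≤ pplTM (n+1) + 1 := by
  obtain ⟨c, hcn, hppl, H⟩ := last_pal n
  have himg := img H
  have hseg : (SEG (4*c+1) (4*n+3)).Palindrome := by
    apply SEG_pal_of_pointwise (by omega)
    intro j h1 h2
    rw [show (4*c+1) + (4*n+3-1) - j = 4*(c+n)+3 - j from by omega]
    exact himg j (by omega) (by omega)
  have s1 : pplTM (4*n+3) ≤ pplTM (4*c+1) + 1 := ppl_le_seg (by omega) hseg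
  have s2 : pplTM (4*c+1) ≤ pplTM (4*c) + 1 := ppl_succ (4*c)
  have s3 := ppl_four c
  omega

lemma U2 (n : ℕ) : pplTM (4*n+2) ≤ pplTM (n+1) + 2 := by
  obtain ⟨c, hcn, hppl, H⟩ := last_pal n
  rcases Nat.lt_or_ge c n with hlt | hge
  · have himg := img H
    have hseg : (SEG (4*c+2) (4*n+2)).Palindrome := by
      apply SEG_pal_of_pointwise (by omega)
      intro j h1 h2
      rw [show (4*c+2) + (4*n+2-1) - j = 4*(c+n)+3 - j from by omega]
      exact himg j (by omega) (by omega)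
    have s1 : pplTM (4*n+2) ≤ pplTM (4*c+2) + 1 := ppl_le_seg (by omega) hseg
    have s2 : pplTM (4*c+2) ≤ pplTM (4*c+1) + 1 := ppl_succ (4*c+1)
    have s3 : pplTM (4*c+1) ≤ pplTM (4*c) + 1 := ppl_succ (4*c)
    have s4 := ppl_four c
    omega
  · have hc : c = n := by omega
    subst hc
    have s1 : pplTM (4*c+2) ≤ pplTM (4*c+1) + 1 := ppl_succ (4*c+1)
    have s2 : pplTM (4*c+1) ≤ pplTM (4*c) + 1 := ppl_succ (4*c)
    have s3 := ppl_four c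
    omega

lemma pplTM_zero : pplTM 0 = 0 := by
  rw [pplTM_eq]
  have : (0:ℕ) ∈ {k | ∃ ps, ps.length = k ∧ IsPalDecomp (W 0) ps} :=
    ⟨[], rfl, rfl, by simp⟩
  exact Nat.le_antisymm (Nat.sInf_le this) (Nat.zero_le _)

lemma pplTM_eq_f : ∀ n, pplTM n = f n := by
  intro n
  have hlow : f n ≤ pplTM n := by
    obtain ⟨ps, hd, hlen⟩ := exists_decomp (W n)
    rw [pplTM_eq, ← hlen]
    exact decomp_bound ps n hd
  have hupp : pplTM n ≤ f n := by
    clear hlow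
    induction n using Nat.strong_induction_on with
    | _ n IH =>
      obtain ⟨m, r, hr, rfl⟩ : ∃ m r, r < 4 ∧ n = 4*m + r :=
        ⟨n/4, n%4, Nat.mod_lt _ (by norm_num), (Nat.div_add_mod n 4).symm⟩
      interval_cases r
      · rcases Nat.eq_zero_or_pos m with rfl | hm
        · simpa [pplTM_zero] using (by rw [f_zero] : f (4*0+0) = 0).le
        · simp only [Nat.add_zero]
          rw [f4_0]
          exact le_trans (ppl_four m) (IH m (by omega))
      · rw [f4_1]
        have s1 : pplTM (4*m+1) ≤ pplTM (4*m) + 1 := ppl_succ (4*m)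
        have s2 := ppl_four m
        have s3 : pplTM m ≤ f m := by
          rcases Nat.eq_zero_or_pos m with rfl | hm
          · rw [pplTM_zero, f_zero]
          · exact IH m (by omega)
        omega
      · rw [f4_2]
        have s1 : pplTM (4*m+2) ≤ pplTM (4*m+1) + 1 := ppl_succ (4*m+1)
        have s2 : pplTM (4*m+1) ≤ pplTM (4*m) + 1 := ppl_succ (4*m)
        have s3 := ppl_four m
        have s4 : pplTM m ≤ f m := by
          rcases Nat.eq_zero_or_pos m with rfl | hm
          · rw [pplTM_zero, f_zero]
          · exact IH m (by omega)
        have s5 := U2 m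
        have s6 : pplTM (m+1) ≤ f (m+1) := IH (m+1) (by omega)
        rcases min_choice (f m) (f (m+1)) with h | h <;> rw [h] <;> omega
      · rw [f4_3]
        have s1 := uppB m
        have s2 : pplTM (4*m+1) ≤ pplTM (4*m) + 1 := ppl_succ (4*m)
        have s3 := ppl_four m
        have s4 : pplTM m ≤ f m := by
          rcases Nat.eq_zero_or_pos m with rfl | hm
          · rw [pplTM_zero, f_zero]
          · exact IH m (by omega)
        have s5 := U3 m
        have s6 : pplTM (m+1) ≤ f (m+1) := IH (m+1) (by omega)
        rcases min_choice (f m + 2) (f (m+1) + 1) with h | h <;> rw [h] <;> omega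
  omega



lemma f_surj (k : ℕ) : ∃ n, f n = k := by
  induction k with
  | zero => exact ⟨0, f_zero⟩
  | succ j ih => obtain ⟨n, hn⟩ := ih; exact ⟨4*n+1, by rw [f4_1, hn]⟩

lemma sp_set (k : ℕ) : {n | pplTM n = k} = {n | f n = k} := by
  ext n; simp [pplTM_eq_f]

lemma sp2_set (k : ℕ) : {n | pplTM n = k ∧ pplTM (n+1) = k} = {n | f n = k ∧ f (n+1) = k} := by
  ext n; simp [pplTM_eq_f]

lemma sp_eq (k : ℕ) : spTM k = sInf {n | f n = k} := by rw [spTM, sp_set]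

lemma f_sp (k : ℕ) : f (spTM k) = k := by
  rw [sp_eq]
  exact Nat.sInf_mem (f_surj k)

lemma sp_le {k n : ℕ} (h : f n = k) : spTM k ≤ n := by
  rw [sp_eq]; exact Nat.sInf_le h

lemma f_lt_of_lt_sp {k : ℕ} (hk : 1 ≤ k) : ∀ n, n < spTM k → f n < k := by
  intro n
  induction n with
  | zero => intro _; rw [f_zero]; omega
  | succ m ih =>
    intro h
    have h1 := ih (by omega)
    have hne : f (m+1) ≠ k := by
      intro he
      have := sp_le he
      omega
    have := F1 m
    omega

lemma sp_pos {k : ℕ} (hk : 1 ≤ k) : 1 ≤ spTM k := by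
  by_contra h
  have h0 : spTM k = 0 := by omega
  have := f_sp k
  rw [h0, f_zero] at this
  omega

lemma sp_pred {k : ℕ} (hk : 1 ≤ k) : f (spTM k - 1) = k - 1 := by
  have h1 := sp_pos hk
  have h2 := f_lt_of_lt_sp hk (spTM k - 1) (by omega)
  have h3 := F1 (spTM k - 1)
  rw [show spTM k - 1 + 1 = spTM k from by omega, f_sp] at h3
  omega

lemma sp_mono {k : ℕ} (hk : 1 ≤ k) : spTM (k-1) < spTM k := by
  have h1 := sp_pred hk
  have := sp_le h1
  have := sp_pos hk
  omega

-- membership of 4s-2 for k ≥ 2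
lemma mem4s {k : ℕ} (hk : 2 ≤ k) :
    f (4 * spTM (k-1) - 2) = k ∧ f (4 * spTM (k-1) - 1) = k := by
  set s := spTM (k-1) with hs
  have hs1 : 1 ≤ s := sp_pos (by omega)
  have hfs : f s = k - 1 := f_sp (k-1)
  have hfs' : f (s-1) = k - 2 := by
    have := sp_pred (k := k-1) (by omega)
    rw [← hs] at this
    omega
  have e2 : 4*s - 2 = 4*(s-1)+2 := by omega
  have e3 : 4*s - 1 = 4*(s-1)+3 := by omega
  have r2 := f4_2 (s-1)
  have r3 := f4_3 (s-1)
  rw [show s-1+1 = s from by omega] at r2 r3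
  constructor
  · rw [e2, r2, hfs, hfs']
    rcases min_choice (k-2) (k-1) with h | h <;> omega
  · rw [e3, r3, hfs, hfs']
    rcases min_choice (k-2+2) (k-1+1) with h | h <;> omega

-- minimality
lemma min4s {k : ℕ} (hk : 2 ≤ k) :
    ∀ n, f n = k → f (n+1) = k → 4 * spTM (k-1) - 2 ≤ n := by
  intro n hn hn1
  set s := spTM (k-1) with hs
  obtain ⟨m, r, hr, rfl⟩ : ∃ m r, r < 4 ∧ n = 4*m + r :=
    ⟨n/4, n%4, Nat.mod_lt _ (by norm_num), (Nat.div_add_mod n 4).symm⟩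
  interval_cases r
  · -- r = 0 : impossible
    exfalso
    simp only [Nat.add_zero] at hn
    rw [f4_0] at hn
    rw [show 4*m+0+1 = 4*m+1 from by omega, f4_1] at hn1
    omega
  · -- r = 1
    rw [f4_1] at hn
    have : s ≤ m := sp_le (k := k-1) (by omega)
    omega
  · -- r = 2
    rw [f4_2] at hn
    rw [show 4*m+2+1 = 4*m+3 from by omega, f4_3] at hn1
    have hsm : s ≤ m + 1 := by
      by_contra hc
      have l1 : f m < k - 1 := f_lt_of_lt_sp (by omega) m (by omega)
      have l2 : f (m+1) < k - 1 := f_lt_of_lt_sp (by omega) (m+1) (by omega)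
      rcases min_choice (f m) (f (m+1)) with h | h <;>
        rcases min_choice (f m + 2) (f (m+1) + 1) with h' | h' <;> omega
    omega
  · -- r = 3
    rw [show 4*m+3+1 = 4*(m+1) from by omega, f4_0] at hn1
    have h1 : spTM k ≤ m + 1 := sp_le hn1
    have h2 : s < spTM k := sp_mono (by omega)
    omega

lemma sp2_val {k : ℕ} (hk : 2 ≤ k) : sp2TM k = 4 * spTM (k-1) - 2 := by
  have hmem : (4 * spTM (k-1) - 2) ∈ {n | f n = k ∧ f (n+1) = k} := by
    obtain ⟨h1, h2⟩ := mem4s hk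
    refine ⟨h1, ?_⟩
    rw [show 4 * spTM (k-1) - 2 + 1 = 4 * spTM (k-1) - 1 from by
      have := sp_pos (k := k-1) (by omega); omega]
    exact h2
  have hne : {n | f n = k ∧ f (n+1) = k}.Nonempty := ⟨_, hmem⟩
  rw [sp2TM, sp2_set]
  apply Nat.le_antisymm
  · exact Nat.sInf_le hmem
  · have hm := Nat.sInf_mem hne
    exact min4s hk _ hm.1 hm.2

end AuxTM

/-- For every `k ≥ 2` there exists `n` with `PPL_t(n) = PPL_t(n+1) = k` (so
`SP2_t(k)` is well defined); moreover `SP2_t(k) = 4·SP_t(k−1) − 2` for all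
`k ≥ 2`, and `SP_t(k−1) ≤ SP2_t(k−1) < SP_t(k)` for all `k ≥ 3`. -/
theorem sp2TM_properties :
    (∀ k, 2 ≤ k → ∃ n, pplTM n = k ∧ pplTM (n + 1) = k) ∧
    (∀ k, 2 ≤ k → sp2TM k + 2 = 4 * spTM (k - 1)) ∧
    (∀ k, 3 ≤ k → spTM (k - 1) ≤ sp2TM (k - 1) ∧ sp2TM (k - 1) < spTM k) := by
  refine ⟨?_, ?_, ?_⟩
  · intro k hk
    obtain ⟨h1, h2⟩ := mem4s hk
    have hs1 := sp_pos (k := k-1) (by omega)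
    refine ⟨4 * spTM (k-1) - 2, by rw [pplTM_eq_f]; exact h1, ?_⟩
    rw [pplTM_eq_f, show 4*spTM (k-1) - 2 + 1 = 4*spTM (k-1) - 1 from by omega]
    exact h2
  · intro k hk
    rw [sp2_val hk]
    have := sp_pos (k := k-1) (by omega)
    omega
  · intro k hk
    have h21 : 2 ≤ k - 1 := by omega
    have hval : sp2TM (k-1) = 4 * spTM (k-1-1) - 2 := sp2_val h21
    have hs2pos : 1 ≤ spTM (k-1-1) := sp_pos (by omega)
    constructor
    · rw [hval]
      exact sp_le (mem4s h21).1
    · rw [hval]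
      have hk2 : 1 ≤ k-1-1 := by omega
      have key : ∀ n, n ≤ 4 * spTM (k-1-1) - 2 → f n < k := by
        intro n hn
        obtain ⟨m, r, hr, rfl⟩ : ∃ m r, r < 4 ∧ n = 4*m + r :=
          ⟨n/4, n%4, Nat.mod_lt _ (by norm_num), (Nat.div_add_mod n 4).symm⟩
        interval_cases r
        · simp only [Nat.add_zero]
          rw [f4_0]
          have := f_lt_of_lt_sp hk2 m (by omega)
          omega
        · rw [f4_1]
          have := f_lt_of_lt_sp hk2 m (by omega)
          omega
        · rw [f4_2]
          have := f_lt_of_lt_sp hk2 m (by omega)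
          have := min_le_left (f m) (f (m+1))
          omega
        · rw [f4_3]
          have := f_lt_of_lt_sp hk2 m (by omega)
          have := min_le_left (f m + 2) (f (m+1) + 1)
          omega
      have hfk := f_sp k
      by_contra hc
      push_neg at hc
      have := key (spTM k) hc
      omega
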